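/- Let s ≥ 3 and N ≥ 1. Suppose φ : Σ_s → ℝ^N is bounded by some R > 0 and exponentially locally determined. Let ξ^(1), ξ^(2), …, ξ^(k) ∈ Σ_s be periodic sequences with rotation vectors ρ_i = ρ_φ(ξ^(i)), i = 1,…,k. Then for every v in the convex hull conv(ρ_1,…,ρ_k) (i.e. v = Σ_{i=1}^k t_i ρ_i for some t_i ≥ 0 with Σ_{i=1}^k t_i = 1) and every ε > 0, there exists a periodic sequence η ∈ Σ_s such that ‖ρ_φ(η) − v‖ < ε. -/

import Mathlib

open Filter Topology

/-- The symbol space `Σ_s`: bi-infinite admissible sequences over an alphabet with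
`s` symbols (represented by `Fin s`), i.e. `ξ_i ≠ ξ_{i+1}` for all `i ∈ ℤ`. -/
def SymbSpace (s : ℕ) : Type := {ξ : ℤ → Fin s // ∀ i : ℤ, ξ i ≠ ξ (i + 1)}

/-- The (left) shift map `σ : Σ_s → Σ_s`, `(σξ)_i = ξ_{i+1}`. -/
def shift {s : ℕ} (ξ : SymbSpace s) : SymbSpace s :=
  ⟨fun i => ξ.1 (i + 1), fun i => ξ.2 (i + 1)⟩

/-- Birkhoff average `A_n(ξ) = (1/n) ∑_{i=0}^{n-1} φ(σ^i ξ)`. -/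
noncomputable def birk {s N : ℕ} (φ : SymbSpace s → EuclideanSpace ℝ (Fin N))
    (n : ℕ) (ξ : SymbSpace s) : EuclideanSpace ℝ (Fin N) :=
  (n : ℝ)⁻¹ • ∑ i ∈ Finset.range n, φ (shift^[i] ξ)

/-- `ρ` is the rotation vector `ρ_φ(ξ)`, i.e. the limit of the Birkhoff averages exists
and equals `ρ`. -/
def HasRotVec {s N : ℕ} (φ : SymbSpace s → EuclideanSpace ℝ (Fin N))
    (ξ : SymbSpace s) (ρ : EuclideanSpace ℝ (Fin N)) : Prop :=
  Tendsto (fun n => birk φ n ξ) atTop (nhds ρ)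

/-- `φ` is exponentially locally determined: there are `C > 0` and `δ ∈ (0,1)` such that
whenever `ξ_j = ξ'_j` for all `-m ≤ j ≤ m'`, one has `‖φ(ξ) - φ(ξ')‖ ≤ C(δ^m + δ^{m'})`. -/
def ExpLocDet {s N : ℕ} (φ : SymbSpace s → EuclideanSpace ℝ (Fin N)) : Prop :=
  ∃ C : ℝ, 0 < C ∧ ∃ δ : ℝ, 0 < δ ∧ δ < 1 ∧
    ∀ (m m' : ℕ) (ξ ξ' : SymbSpace s),
      (∀ j : ℤ, -(m : ℤ) ≤ j → j ≤ (m' : ℤ) → ξ.1 j = ξ'.1 j) →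
      ‖φ ξ - φ ξ'‖ ≤ C * (δ ^ m + δ ^ m')

lemma shift_iter_apply {s : ℕ} (ξ : SymbSpace s) (m : ℕ) (j : ℤ) :
    (shift^[m] ξ).1 j = ξ.1 (j + m) := by
  induction m generalizing j with
  | zero => simp
  | succ m ih =>
      rw [Function.iterate_succ_apply']
      show (shift^[m] ξ).1 (j + 1) = ξ.1 (j + (m + 1 : ℕ))
      rw [ih]
      congr 1
      push_cast
      ring

lemma shift_iter_per {s : ℕ} {ξ : SymbSpace s} {p : ℕ} (h : shift^[p] ξ = ξ) (j : ℕ) :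
    shift^[j + p] ξ = shift^[j] ξ := by
  rw [Function.iterate_add_apply, h]

lemma sum_norm_le {s N : ℕ} (φ : SymbSpace s → EuclideanSpace ℝ (Fin N))
    {R : ℝ} (hbdd : ∀ ξ, ‖φ ξ‖ ≤ R) (n : ℕ) (ξ : SymbSpace s) :
    ‖∑ i ∈ Finset.range n, φ (shift^[i] ξ)‖ ≤ n * R := by
  calc ‖∑ i ∈ Finset.range n, φ (shift^[i] ξ)‖
      ≤ ∑ i ∈ Finset.range n, ‖φ (shift^[i] ξ)‖ := norm_sum_le _ _
    _ ≤ ∑ _i ∈ Finset.range n, R := Finset.sum_le_sum fun i _ => hbdd _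
    _ = n * R := by simp [mul_comm]

lemma sum_per_add {s N : ℕ} (φ : SymbSpace s → EuclideanSpace ℝ (Fin N))
    {ξ : SymbSpace s} {p : ℕ} (h : shift^[p] ξ = ξ) (n : ℕ) :
    ∑ i ∈ Finset.range (p + n), φ (shift^[i] ξ)
      = ∑ i ∈ Finset.range p, φ (shift^[i] ξ) + ∑ i ∈ Finset.range n, φ (shift^[i] ξ) := by
  rw [Finset.sum_range_add]
  congr 1
  refine Finset.sum_congr rfl fun i _ => ?_
  rw [Nat.add_comm p i, shift_iter_per h]

lemma sum_per_mul {s N : ℕ} (φ : SymbSpace s → EuclideanSpace ℝ (Fin N))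
    {ξ : SymbSpace s} {p : ℕ} (h : shift^[p] ξ = ξ) (m : ℕ) :
    ∑ i ∈ Finset.range (m * p), φ (shift^[i] ξ)
      = m • ∑ i ∈ Finset.range p, φ (shift^[i] ξ) := by
  induction m with
  | zero => simp
  | succ m ih =>
      have h1 : (m + 1) * p = p + m * p := by ring
      rw [h1, sum_per_add φ h, ih, succ_nsmul]
      abel

lemma hasRotVec_of_periodic {s N : ℕ} (φ : SymbSpace s → EuclideanSpace ℝ (Fin N))
    {R : ℝ} (hR : 0 < R) (hbdd : ∀ ξ, ‖φ ξ‖ ≤ R)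
    {η : SymbSpace s} {q : ℕ} (hq : 0 < q) (h : shift^[q] η = η) :
    HasRotVec φ η (birk φ q η) := by
  have hq' : (0:ℝ) < q := by exact_mod_cast hq
  have hbq : ‖birk φ q η‖ ≤ R := by
    rw [birk, norm_smul]
    calc ‖((q:ℝ))⁻¹‖ * ‖∑ i ∈ Finset.range q, φ (shift^[i] η)‖
        ≤ (q:ℝ)⁻¹ * (q * R) := by
          apply mul_le_mul _ (sum_norm_le φ hbdd q η) (norm_nonneg _) (by positivity)
          simp
      _ = R := by field_simp
  rw [HasRotVec, tendsto_iff_norm_sub_tendsto_zero]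
  refine squeeze_zero' (g := fun n : ℕ => (2 * q * R) / (n:ℝ))
    (Eventually.of_forall fun n => norm_nonneg _) ?_
    (tendsto_const_div_atTop_nhds_zero_nat _)
  filter_upwards [eventually_ge_atTop 1] with n hn
  · have hn' : (0:ℝ) < n := by exact_mod_cast hn
    set S := ∑ i ∈ Finset.range q, φ (shift^[i] η) with hS
    set Sr := ∑ i ∈ Finset.range (n % q), φ (shift^[i] η) with hSr
    have hmul : shift^[n / q * q] η = η := by
      rw [mul_comm, Function.iterate_mul]
      exact Function.iterate_fixed h _
    have hn_eq : n = n / q * q + n % q := by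
      rw [mul_comm]; exact (Nat.div_add_mod n q).symm
    have hsplit : ∑ i ∈ Finset.range n, φ (shift^[i] η)
        = ((n / q : ℕ) : ℝ) • S + Sr := by
      conv_lhs => rw [hn_eq]
      rw [sum_per_add φ hmul, sum_per_mul φ h]
      rw [Nat.cast_smul_eq_nsmul]
    have hbirk : birk φ n η - birk φ q η
        = ((n:ℝ)⁻¹ * (n / q : ℕ) - (q:ℝ)⁻¹) • S + (n:ℝ)⁻¹ • Sr := by
      rw [birk, birk, hsplit, ← hS]
      module
    rw [hbirk]
    have hSle : ‖S‖ ≤ q * R := sum_norm_le φ hbdd q η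
    have hSrle : ‖Sr‖ ≤ q * R := by
      refine le_trans (sum_norm_le φ hbdd _ η) ?_
      have h3 : ((n % q : ℕ) : ℝ) ≤ (q:ℝ) := by
        exact_mod_cast le_of_lt (Nat.mod_lt n hq)
      nlinarith
    have hcoef : |(n:ℝ)⁻¹ * (n / q : ℕ) - (q:ℝ)⁻¹| ≤ (n:ℝ)⁻¹ := by
      have h1 : (n:ℝ) = (n / q : ℕ) * q + (n % q : ℕ) := by exact_mod_cast hn_eq
      have h2 : (n:ℝ)⁻¹ * (n / q : ℕ) - (q:ℝ)⁻¹ = -((n % q : ℕ) / (n * q)) := by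
        field_simp
        nlinarith [h1]
      rw [h2, abs_neg, abs_div]
      rw [abs_of_nonneg (by positivity : (0:ℝ) ≤ ((n % q : ℕ):ℝ)),
        abs_of_nonneg (by positivity : (0:ℝ) ≤ (n:ℝ) * q)]
      rw [div_le_iff₀ (by positivity)]
      have : ((n % q : ℕ) : ℝ) ≤ q := by exact_mod_cast le_of_lt (Nat.mod_lt n hq)
      calc ((n % q : ℕ) : ℝ) ≤ q := this
        _ = (n:ℝ)⁻¹ * (n * q) := by field_simp
    calc ‖((n:ℝ)⁻¹ * (n / q : ℕ) - (q:ℝ)⁻¹) • S + (n:ℝ)⁻¹ • Sr‖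
        ≤ ‖((n:ℝ)⁻¹ * (n / q : ℕ) - (q:ℝ)⁻¹) • S‖ + ‖(n:ℝ)⁻¹ • Sr‖ := norm_add_le _ _
      _ ≤ (n:ℝ)⁻¹ * (q * R) + (n:ℝ)⁻¹ * (q * R) := by
          rw [norm_smul, norm_smul, Real.norm_eq_abs, Real.norm_eq_abs,
            abs_of_nonneg (by positivity : (0:ℝ) ≤ (n:ℝ)⁻¹)]
          have h1 : |(n:ℝ)⁻¹ * ((n / q : ℕ):ℝ) - (q:ℝ)⁻¹| * ‖S‖ ≤ (n:ℝ)⁻¹ * (q * R) :=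
            mul_le_mul hcoef hSle (norm_nonneg _) (by positivity)
          have h2 : (n:ℝ)⁻¹ * ‖Sr‖ ≤ (n:ℝ)⁻¹ * (q * R) := by
            apply mul_le_mul_of_nonneg_left hSrle (by positivity)
          linarith
      _ = 2 * q * R / n := by field_simp; ring

lemma norm_birk_le {s N : ℕ} (φ : SymbSpace s → EuclideanSpace ℝ (Fin N))
    {R : ℝ} (hR : 0 < R) (hbdd : ∀ ξ, ‖φ ξ‖ ≤ R) {n : ℕ} (hn : 0 < n) (ξ : SymbSpace s) :
    ‖birk φ n ξ‖ ≤ R := by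
  have hn' : (0:ℝ) < n := by exact_mod_cast hn
  rw [birk, norm_smul]
  calc ‖((n:ℝ))⁻¹‖ * ‖∑ i ∈ Finset.range n, φ (shift^[i] ξ)‖
      ≤ (n:ℝ)⁻¹ * (n * R) := by
        apply mul_le_mul _ (sum_norm_le φ hbdd n ξ) (norm_nonneg _) (by positivity)
        simp
    _ = R := by field_simp

lemma rotvec_eq_birk {s N : ℕ} (φ : SymbSpace s → EuclideanSpace ℝ (Fin N))
    {R : ℝ} (hR : 0 < R) (hbdd : ∀ ξ, ‖φ ξ‖ ≤ R)
    {ξ : SymbSpace s} {p : ℕ} (hp : 0 < p) (hper : shift^[p] ξ = ξ)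
    {ρ : EuclideanSpace ℝ (Fin N)} (hρ : HasRotVec φ ξ ρ) :
    ρ = birk φ p ξ :=
  tendsto_nhds_unique hρ (hasRotVec_of_periodic φ hR hbdd hp hper)

lemma exists_third {s : ℕ} (hs : 3 ≤ s) (a b : Fin s) : ∃ c : Fin s, c ≠ a ∧ c ≠ b := by
  by_contra h
  push_neg at h
  have hsub : (Finset.univ : Finset (Fin s)) ⊆ {a, b} := by
    intro c _
    rcases Classical.em (c = a) with hc | hc
    · simp [hc]
    · simp [h c hc]
  have := Finset.card_le_card hsub
  simp only [Finset.card_univ, Fintype.card_fin] at this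
  have h2 : ({a, b} : Finset (Fin s)).card ≤ 2 :=
    le_trans (Finset.card_insert_le _ _) (by simp)
  omega

lemma geom_bound {δ : ℝ} (h0 : 0 ≤ δ) (h1 : δ < 1) (n : ℕ) :
    ∑ i ∈ Finset.range n, δ ^ i ≤ (1 - δ)⁻¹ := by
  have := Summable.sum_le_tsum (Finset.range n) (fun i _ => by positivity)
    (summable_geometric_of_lt_one h0 h1)
  rwa [tsum_geometric_of_lt_one h0 h1] at this

set_option maxHeartbeats 2000000 in
lemma binary_approx {s N : ℕ} (hs : 3 ≤ s)
    (φ : SymbSpace s → EuclideanSpace ℝ (Fin N))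
    {R : ℝ} (hR : 0 < R) (hbdd : ∀ ξ, ‖φ ξ‖ ≤ R) (hloc : ExpLocDet φ)
    {ξ ξ' : SymbSpace s} {p p' : ℕ} (hp : 0 < p) (hp' : 0 < p')
    (hper : shift^[p] ξ = ξ) (hper' : shift^[p'] ξ' = ξ')
    {ρ ρ' : EuclideanSpace ℝ (Fin N)} (hρ : HasRotVec φ ξ ρ) (hρ' : HasRotVec φ ξ' ρ')
    {θ : ℝ} (hθ0 : 0 ≤ θ) (hθ1 : θ ≤ 1) {ε : ℝ} (hε : 0 < ε) :
    ∃ (η : SymbSpace s) (q : ℕ), 0 < q ∧ shift^[q] η = η ∧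
      HasRotVec φ η (birk φ q η) ∧ ‖birk φ q η - (θ • ρ + (1 - θ) • ρ')‖ < ε := by
  classical
  obtain ⟨C, hC, δ, hδ0, hδ1, hexp⟩ := hloc
  -- the error constant
  set K : ℝ := 4 * C * (1 - δ)⁻¹ + 2 * R with hK
  have hKpos : 0 < K := by
    have h1 : (0:ℝ) < (1 - δ)⁻¹ := by
      apply inv_pos.2; linarith
    have h2 : (0:ℝ) < 4 * C * (1 - δ)⁻¹ := by positivity
    simp only [hK]
    linarith
  set P : ℕ := p * p' with hPdef
  have hPpos : 0 < P := Nat.mul_pos hp hp'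
  have hP1 : (1:ℝ) ≤ P := by exact_mod_cast hPpos
  -- choose n large
  obtain ⟨n, hnlarge⟩ := exists_nat_gt ((K + 2 * R * (2 * P + 2)) / ε)
  have hn1 : 1 ≤ n := by
    by_contra h
    push_neg at h
    interval_cases n
    · simp at hnlarge
      have : 0 < (K + 2 * R * (2 * P + 2)) / ε := by positivity
      linarith
  have hn' : (0:ℝ) < n := by exact_mod_cast hn1
  set A : ℕ := ⌊θ * n⌋₊ + 1 with hAdef
  set B : ℕ := ⌊(1 - θ) * n⌋₊ + 1 with hBdef
  set L1 : ℕ := A * p' * p with hL1def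
  set L2 : ℕ := B * p * p' with hL2def
  have hL1pos : 0 < L1 := Nat.mul_pos (Nat.mul_pos (by omega) hp') hp
  have hL2pos : 0 < L2 := Nat.mul_pos (Nat.mul_pos (by omega) hp) hp'
  set q : ℕ := L1 + 1 + L2 + 1 with hqdef
  have hqpos : 0 < q := by omega
  -- real versions of floor bounds
  have hA1 : θ * n < (A:ℝ) := by
    have := Nat.lt_floor_add_one (θ * n)
    push_cast [hAdef]
    push_cast at this
    linarith
  have hA2 : (A:ℝ) ≤ θ * n + 1 := by
    have := Nat.floor_le (by positivity : (0:ℝ) ≤ θ * n)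
    push_cast [hAdef]
    linarith
  have hB1 : (1 - θ) * n < (B:ℝ) := by
    have := Nat.lt_floor_add_one ((1 - θ) * n)
    push_cast [hBdef]
    push_cast at this
    linarith
  have hB2 : (B:ℝ) ≤ (1 - θ) * n + 1 := by
    have := Nat.floor_le (mul_nonneg (by linarith) hn'.le : (0:ℝ) ≤ (1 - θ) * n)
    push_cast [hBdef]
    linarith
  have hL1R : (L1:ℝ) = A * P := by push_cast [hL1def, hPdef]; ring
  have hL2R : (L2:ℝ) = B * P := by push_cast [hL2def, hPdef]; ring
  have hqR : (q:ℝ) = (A:ℝ) * P + (B:ℝ) * P + 2 := by push_cast [hqdef, hL1def, hL2def, hPdef]; ring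
  have hnq : (n:ℝ) ≤ q := by nlinarith
  have hq' : (0:ℝ) < q := lt_of_lt_of_le hn' hnq
  -- connector symbols
  obtain ⟨c, hc1, hc2⟩ := exists_third hs (ξ.1 ((L1:ℤ) - 1)) (ξ'.1 0)
  obtain ⟨d, hd1, hd2⟩ := exists_third hs (ξ'.1 ((L2:ℤ) - 1)) (ξ.1 0)
  -- the concatenated sequence
  set f : ℤ → Fin s := fun j =>
    if j % (q:ℤ) < (L1:ℤ) then ξ.1 (j % (q:ℤ))
    else if j % (q:ℤ) = (L1:ℤ) then c
    else if j % (q:ℤ) < (L1:ℤ) + 1 + (L2:ℤ) then ξ'.1 (j % (q:ℤ) - L1 - 1)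
    else d with hfdef
  have hqZ : (0:ℤ) < (q:ℤ) := by exact_mod_cast hqpos
  have hqcast : (q:ℤ) = (L1:ℤ) + 1 + (L2:ℤ) + 1 := by push_cast [hqdef]; ring
  have hL1Z : (1:ℤ) ≤ (L1:ℤ) := by exact_mod_cast hL1pos
  have hL2Z : (1:ℤ) ≤ (L2:ℤ) := by exact_mod_cast hL2pos
  have hmod_eq : ∀ r : ℤ, 0 ≤ r → r < (q:ℤ) → r % (q:ℤ) = r := fun r h1 h2 =>
    Int.emod_eq_of_lt h1 h2
  -- evaluation lemmas
  have hf1 : ∀ r : ℤ, 0 ≤ r → r < (L1:ℤ) → f r = ξ.1 r := by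
    intro r h1 h2
    simp only [hfdef]
    rw [hmod_eq r h1 (by omega), if_pos h2]
  have hfc : f (L1:ℤ) = c := by
    simp only [hfdef]
    rw [hmod_eq _ (by omega) (by omega), if_neg (by omega), if_pos rfl]
  have hf2 : ∀ r : ℤ, 0 ≤ r → r < (L2:ℤ) → f ((L1:ℤ) + 1 + r) = ξ'.1 r := by
    intro r h1 h2
    simp only [hfdef]
    rw [hmod_eq _ (by omega) (by omega), if_neg (by omega), if_neg (by omega),
      if_pos (by omega)]
    congr 1
    ring
  have hfd : f ((L1:ℤ) + 1 + (L2:ℤ)) = d := by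
    simp only [hfdef]
    rw [hmod_eq _ (by omega) (by omega), if_neg (by omega), if_neg (by omega),
      if_neg (by omega)]
  have hfmod : ∀ j : ℤ, f j = f (j % (q:ℤ)) := by
    intro j
    simp only [hfdef, Int.emod_emod_of_dvd _ dvd_rfl]
  -- admissibility
  have hadm : ∀ j : ℤ, f j ≠ f (j + 1) := by
    intro j
    have hr0 : 0 ≤ j % (q:ℤ) := Int.emod_nonneg j (by omega)
    have hrq : j % (q:ℤ) < (q:ℤ) := Int.emod_lt_of_pos j hqZ
    set r : ℤ := j % (q:ℤ) with hrdef
    have hkey : (j + 1) % (q:ℤ) = (r + 1) % (q:ℤ) := by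
      conv_lhs => rw [← Int.mul_ediv_add_emod j (q:ℤ), ← hrdef]
      rw [show (q:ℤ) * (j / (q:ℤ)) + r + 1 = r + 1 + (q:ℤ) * (j / (q:ℤ)) by ring]
      rw [Int.add_mul_emod_self_left]
    rw [hfmod j, hfmod (j + 1), ← hrdef, hkey]
    have hcases : r + 1 < (L1:ℤ) ∨ r + 1 = (L1:ℤ) ∨ r = (L1:ℤ) ∨
        ((L1:ℤ) + 1 ≤ r ∧ r + 1 < (L1:ℤ) + 1 + (L2:ℤ)) ∨ r + 1 = (L1:ℤ) + 1 + (L2:ℤ) ∨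
        r = (L1:ℤ) + 1 + (L2:ℤ) := by omega
    rcases hcases with h | h | h | ⟨h1, h2⟩ | h | h
    · rw [hmod_eq _ (by omega) (by omega), hf1 r hr0 (by omega), hf1 _ (by omega) h]
      exact ξ.2 r
    · rw [hmod_eq _ (by omega) (by omega), hf1 r hr0 (by omega), h, hfc]
      have hr : r = (L1:ℤ) - 1 := by omega
      rw [hr]
      exact fun hh => hc1 hh.symm
    · rw [hmod_eq _ (by omega) (by omega), h, hfc,
        show (L1:ℤ) + 1 = (L1:ℤ) + 1 + 0 by ring, hf2 0 le_rfl (by omega)]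
      exact hc2
    · rw [hmod_eq _ (by omega) (by omega)]
      have e1 := hf2 (r - L1 - 1) (by omega) (by omega)
      rw [show (L1:ℤ) + 1 + (r - L1 - 1) = r by ring] at e1
      have e2 := hf2 (r - L1) (by omega) (by omega)
      rw [show (L1:ℤ) + 1 + (r - L1) = r + 1 by ring] at e2
      rw [e1, e2]
      have h3 := ξ'.2 (r - L1 - 1)
      rwa [show r - (L1:ℤ) - 1 + 1 = r - L1 by ring] at h3
    · rw [hmod_eq _ (by omega) (by omega)]
      have e1 := hf2 ((L2:ℤ) - 1) (by omega) (by omega)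
      rw [show (L1:ℤ) + 1 + ((L2:ℤ) - 1) = r by omega] at e1
      rw [e1, h, hfd]
      exact fun hh => hd1 hh.symm
    · rw [show r + 1 = (q:ℤ) by omega, Int.emod_self, h, hfd,
        hf1 0 le_rfl (by omega)]
      exact hd2
  set η : SymbSpace s := ⟨f, hadm⟩ with hηdef
  have hηper : shift^[q] η = η := by
    apply Subtype.ext
    funext j
    rw [shift_iter_apply]
    show f (j + (q:ℤ)) = f j
    rw [hfmod (j + (q:ℤ)), show j + (q:ℤ) = j + (q:ℤ) * 1 by ring,
      Int.add_mul_emod_self_left, hfmod j]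
  have hrot : HasRotVec φ η (birk φ q η) := hasRotVec_of_periodic φ hR hbdd hqpos hηper
  refine ⟨η, q, hqpos, hηper, hrot, ?_⟩
  have hρeq : ρ = birk φ p ξ := rotvec_eq_birk φ hR hbdd hp hper hρ
  have hρ'eq : ρ' = birk φ p' ξ' := rotvec_eq_birk φ hR hbdd hp' hper' hρ'
  have hρR : ‖ρ‖ ≤ R := hρeq ▸ norm_birk_le φ hR hbdd hp ξ
  have hρ'R : ‖ρ'‖ ≤ R := hρ'eq ▸ norm_birk_le φ hR hbdd hp' ξ'
  have hpne : ((p:ℝ)) ≠ 0 := by positivity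
  have hp'ne : ((p':ℝ)) ≠ 0 := by positivity
  have hSp : ∑ i ∈ Finset.range p, φ (shift^[i] ξ) = (p:ℝ) • ρ := by
    rw [hρeq, birk]
    exact (smul_inv_smul₀ hpne _).symm
  have hSp' : ∑ i ∈ Finset.range p', φ (shift^[i] ξ') = (p':ℝ) • ρ' := by
    rw [hρ'eq, birk]
    exact (smul_inv_smul₀ hp'ne _).symm
  have hXi : ∑ i ∈ Finset.range L1, φ (shift^[i] ξ) = (L1:ℝ) • ρ := by
    have h1 := sum_per_mul φ hper (A * p')
    rw [hL1def, h1, hSp, ← Nat.cast_smul_eq_nsmul ℝ, smul_smul]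
    congr 1
    push_cast
    ring
  have hXi' : ∑ i ∈ Finset.range L2, φ (shift^[i] ξ') = (L2:ℝ) • ρ' := by
    have h1 := sum_per_mul φ hper' (B * p)
    rw [hL2def, h1, hSp', ← Nat.cast_smul_eq_nsmul ℝ, smul_smul]
    congr 1
    push_cast
    ring
  have hterm1 : ∀ i ∈ Finset.range L1,
      ‖φ (shift^[i] η) - φ (shift^[i] ξ)‖ ≤ C * (δ ^ i + δ ^ (L1 - 1 - i)) := by
    intro i hi
    rw [Finset.mem_range] at hi
    apply hexp i (L1 - 1 - i)
    intro j hj1 hj2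
    have hc1' : ((L1 - 1 - i : ℕ) : ℤ) = (L1:ℤ) - 1 - (i:ℤ) := by omega
    rw [hc1'] at hj2
    rw [shift_iter_apply, shift_iter_apply]
    show f (j + i) = ξ.1 (j + i)
    exact hf1 _ (by omega) (by omega)
  have hterm2 : ∀ i ∈ Finset.range L2,
      ‖φ (shift^[(L1 + 1) + i] η) - φ (shift^[i] ξ')‖ ≤ C * (δ ^ i + δ ^ (L2 - 1 - i)) := by
    intro i hi
    rw [Finset.mem_range] at hi
    apply hexp i (L2 - 1 - i)
    intro j hj1 hj2
    have hc1' : ((L2 - 1 - i : ℕ) : ℤ) = (L2:ℤ) - 1 - (i:ℤ) := by omega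
    rw [hc1'] at hj2
    rw [shift_iter_apply, shift_iter_apply]
    show f (j + ((L1 + 1 + i : ℕ) : ℤ)) = ξ'.1 (j + i)
    have e := hf2 (j + i) (by omega) (by omega)
    rw [show (L1:ℤ) + 1 + (j + i) = j + ((L1 + 1 + i : ℕ) : ℤ) by push_cast; ring] at e
    exact e
  have hδ0' : (0:ℝ) ≤ δ := hδ0.le
  have hsum1 : ‖∑ i ∈ Finset.range L1, (φ (shift^[i] η) - φ (shift^[i] ξ))‖
      ≤ 2 * C * (1 - δ)⁻¹ := by
    calc ‖∑ i ∈ Finset.range L1, (φ (shift^[i] η) - φ (shift^[i] ξ))‖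
        ≤ ∑ i ∈ Finset.range L1, ‖φ (shift^[i] η) - φ (shift^[i] ξ)‖ := norm_sum_le _ _
      _ ≤ ∑ i ∈ Finset.range L1, C * (δ ^ i + δ ^ (L1 - 1 - i)) := Finset.sum_le_sum hterm1
      _ = C * ((∑ i ∈ Finset.range L1, δ ^ i) + ∑ i ∈ Finset.range L1, δ ^ (L1 - 1 - i)) := by
          rw [← Finset.sum_add_distrib, Finset.mul_sum]
      _ = C * ((∑ i ∈ Finset.range L1, δ ^ i) + ∑ i ∈ Finset.range L1, δ ^ i) := by
          rw [Finset.sum_range_reflect (fun i => δ ^ i) L1]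
      _ ≤ C * ((1 - δ)⁻¹ + (1 - δ)⁻¹) := by
          exact mul_le_mul_of_nonneg_left (add_le_add (geom_bound hδ0' hδ1 L1)
            (geom_bound hδ0' hδ1 L1)) hC.le
      _ = 2 * C * (1 - δ)⁻¹ := by ring
  have hsum2 : ‖∑ i ∈ Finset.range L2, (φ (shift^[(L1 + 1) + i] η) - φ (shift^[i] ξ'))‖
      ≤ 2 * C * (1 - δ)⁻¹ := by
    calc ‖∑ i ∈ Finset.range L2, (φ (shift^[(L1 + 1) + i] η) - φ (shift^[i] ξ'))‖
        ≤ ∑ i ∈ Finset.range L2, ‖φ (shift^[(L1 + 1) + i] η) - φ (shift^[i] ξ')‖ :=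
          norm_sum_le _ _
      _ ≤ ∑ i ∈ Finset.range L2, C * (δ ^ i + δ ^ (L2 - 1 - i)) := Finset.sum_le_sum hterm2
      _ = C * ((∑ i ∈ Finset.range L2, δ ^ i) + ∑ i ∈ Finset.range L2, δ ^ (L2 - 1 - i)) := by
          rw [← Finset.sum_add_distrib, Finset.mul_sum]
      _ = C * ((∑ i ∈ Finset.range L2, δ ^ i) + ∑ i ∈ Finset.range L2, δ ^ i) := by
          rw [Finset.sum_range_reflect (fun i => δ ^ i) L2]
      _ ≤ C * ((1 - δ)⁻¹ + (1 - δ)⁻¹) := by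
          exact mul_le_mul_of_nonneg_left (add_le_add (geom_bound hδ0' hδ1 L2)
            (geom_bound hδ0' hδ1 L2)) hC.le
      _ = 2 * C * (1 - δ)⁻¹ := by ring
  have hsplitq : ∑ i ∈ Finset.range q, φ (shift^[i] η)
      = (∑ i ∈ Finset.range L1, φ (shift^[i] η)) + φ (shift^[L1] η)
        + ((∑ i ∈ Finset.range L2, φ (shift^[(L1 + 1) + i] η)) + φ (shift^[(L1 + 1) + L2] η)) := by
    have h1 : q = (L1 + 1) + (L2 + 1) := by omega
    rw [h1, Finset.sum_range_add, Finset.sum_range_succ, Finset.sum_range_succ]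
  have hkey : (∑ i ∈ Finset.range q, φ (shift^[i] η)) - ((L1:ℝ) • ρ + (L2:ℝ) • ρ')
      = (∑ i ∈ Finset.range L1, (φ (shift^[i] η) - φ (shift^[i] ξ)))
        + (∑ i ∈ Finset.range L2, (φ (shift^[(L1 + 1) + i] η) - φ (shift^[i] ξ')))
        + φ (shift^[L1] η) + φ (shift^[(L1 + 1) + L2] η) := by
    rw [hsplitq, Finset.sum_sub_distrib, Finset.sum_sub_distrib, hXi, hXi']
    abel
  have hSest : ‖(∑ i ∈ Finset.range q, φ (shift^[i] η)) - ((L1:ℝ) • ρ + (L2:ℝ) • ρ')‖ ≤ K := by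
    rw [hkey]
    have t1 := norm_add_le ((∑ i ∈ Finset.range L1, (φ (shift^[i] η) - φ (shift^[i] ξ)))
        + (∑ i ∈ Finset.range L2, (φ (shift^[(L1 + 1) + i] η) - φ (shift^[i] ξ')))
        + φ (shift^[L1] η)) (φ (shift^[(L1 + 1) + L2] η))
    have t2 := norm_add_le ((∑ i ∈ Finset.range L1, (φ (shift^[i] η) - φ (shift^[i] ξ)))
        + (∑ i ∈ Finset.range L2, (φ (shift^[(L1 + 1) + i] η) - φ (shift^[i] ξ'))))
        (φ (shift^[L1] η))
    have t3 := norm_add_le (∑ i ∈ Finset.range L1, (φ (shift^[i] η) - φ (shift^[i] ξ)))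
        (∑ i ∈ Finset.range L2, (φ (shift^[(L1 + 1) + i] η) - φ (shift^[i] ξ')))
    have b1 := hbdd (shift^[L1] η)
    have b2 := hbdd (shift^[(L1 + 1) + L2] η)
    simp only [hK]
    linarith
  have hfinal : birk φ q η - (θ • ρ + (1 - θ) • ρ')
      = (q:ℝ)⁻¹ • ((∑ i ∈ Finset.range q, φ (shift^[i] η)) - ((L1:ℝ) • ρ + (L2:ℝ) • ρ'))
        + ((L1:ℝ) / q - θ) • ρ + ((L2:ℝ) / q - (1 - θ)) • ρ' := by
    rw [birk]
    module
  have hP0 : (0:ℝ) ≤ P := by positivity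
  have h1θ0 : (0:ℝ) ≤ 1 - θ := by linarith
  have hAB : (n:ℝ) ≤ (A:ℝ) + (B:ℝ) := by linarith
  have hABu : (A:ℝ) + (B:ℝ) ≤ (n:ℝ) + 2 := by linarith
  have hnum1 : |(L1:ℝ) - θ * q| ≤ 2 * P + 2 := by
    rw [hL1R, hqR, abs_le]
    constructor
    · linarith [mul_le_mul_of_nonneg_right hA1.le hP0,
        mul_le_mul_of_nonneg_left hABu (mul_nonneg hθ0 hP0),
        mul_nonneg (mul_nonneg hθ0 h1θ0) hP0, mul_nonneg hθ0 hP0,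
        mul_nonneg h1θ0 hP0]
    · linarith [mul_le_mul_of_nonneg_right hA2 hP0,
        mul_le_mul_of_nonneg_left hAB (mul_nonneg hθ0 hP0),
        mul_nonneg hθ0 hP0]
  have hnum2 : |(L2:ℝ) - (1 - θ) * q| ≤ 2 * P + 2 := by
    rw [hL2R, hqR, abs_le]
    constructor
    · linarith [mul_le_mul_of_nonneg_right hB1.le hP0,
        mul_le_mul_of_nonneg_left hABu (mul_nonneg h1θ0 hP0),
        mul_nonneg (mul_nonneg hθ0 h1θ0) hP0, mul_nonneg h1θ0 hP0,
        mul_nonneg hθ0 hP0]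
    · linarith [mul_le_mul_of_nonneg_right hB2 hP0,
        mul_le_mul_of_nonneg_left hAB (mul_nonneg h1θ0 hP0),
        mul_nonneg h1θ0 hP0]
  have hw1 : |(L1:ℝ) / q - θ| ≤ (2 * P + 2) / n := by
    rw [show (L1:ℝ) / q - θ = ((L1:ℝ) - θ * q) / q by field_simp, abs_div,
      abs_of_pos hq']
    exact div_le_div₀ (by positivity) hnum1 hn' hnq
  have hw2 : |(L2:ℝ) / q - (1 - θ)| ≤ (2 * P + 2) / n := by
    rw [show (L2:ℝ) / q - (1 - θ) = ((L2:ℝ) - (1 - θ) * q) / q by field_simp, abs_div,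
      abs_of_pos hq']
    exact div_le_div₀ (by positivity) hnum2 hn' hnq
  rw [hfinal]
  have step1 : ‖(q:ℝ)⁻¹ • ((∑ i ∈ Finset.range q, φ (shift^[i] η)) - ((L1:ℝ) • ρ + (L2:ℝ) • ρ'))‖
      ≤ K / n := by
    rw [norm_smul, Real.norm_eq_abs, abs_of_pos (by positivity : (0:ℝ) < (q:ℝ)⁻¹)]
    calc (q:ℝ)⁻¹ * ‖(∑ i ∈ Finset.range q, φ (shift^[i] η)) - ((L1:ℝ) • ρ + (L2:ℝ) • ρ')‖
        ≤ (n:ℝ)⁻¹ * K := by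
          apply mul_le_mul (inv_anti₀ hn' hnq) hSest (norm_nonneg _) (by positivity)
      _ = K / n := by rw [div_eq_mul_inv, mul_comm]
  have step2 : ‖((L1:ℝ) / q - θ) • ρ‖ ≤ (2 * P + 2) / n * R := by
    rw [norm_smul, Real.norm_eq_abs]
    exact mul_le_mul hw1 hρR (norm_nonneg _) (by positivity)
  have step3 : ‖((L2:ℝ) / q - (1 - θ)) • ρ'‖ ≤ (2 * P + 2) / n * R := by
    rw [norm_smul, Real.norm_eq_abs]
    exact mul_le_mul hw2 hρ'R (norm_nonneg _) (by positivity)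
  have tri : ‖(q:ℝ)⁻¹ • ((∑ i ∈ Finset.range q, φ (shift^[i] η)) - ((L1:ℝ) • ρ + (L2:ℝ) • ρ'))
      + ((L1:ℝ) / q - θ) • ρ + ((L2:ℝ) / q - (1 - θ)) • ρ'‖
      ≤ K / n + (2 * P + 2) / n * R + (2 * P + 2) / n * R := by
    calc ‖(q:ℝ)⁻¹ • ((∑ i ∈ Finset.range q, φ (shift^[i] η)) - ((L1:ℝ) • ρ + (L2:ℝ) • ρ'))
        + ((L1:ℝ) / q - θ) • ρ + ((L2:ℝ) / q - (1 - θ)) • ρ'‖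
        ≤ ‖(q:ℝ)⁻¹ • ((∑ i ∈ Finset.range q, φ (shift^[i] η)) - ((L1:ℝ) • ρ + (L2:ℝ) • ρ'))
            + ((L1:ℝ) / q - θ) • ρ‖ + ‖((L2:ℝ) / q - (1 - θ)) • ρ'‖ := norm_add_le _ _
      _ ≤ (‖(q:ℝ)⁻¹ • ((∑ i ∈ Finset.range q, φ (shift^[i] η)) - ((L1:ℝ) • ρ + (L2:ℝ) • ρ'))‖
            + ‖((L1:ℝ) / q - θ) • ρ‖) + ‖((L2:ℝ) / q - (1 - θ)) • ρ'‖ :=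
          add_le_add (norm_add_le _ _) le_rfl
      _ ≤ K / n + (2 * P + 2) / n * R + (2 * P + 2) / n * R := by
          linarith
  refine lt_of_le_of_lt tri ?_
  have : K / n + (2 * P + 2) / n * R + (2 * P + 2) / n * R
      = (K + 2 * R * (2 * P + 2)) / n := by
    field_simp
    ring
  rw [this, div_lt_iff₀ hn']
  rw [div_lt_iff₀ hε] at hnlarge
  linarith

/-- any convex combination `v` of rotation vectors of periodic sequences
can be approximated within any `ε > 0` by the rotation vector of a single periodic
sequence `η`. -/
theorem convex_combination_approx_by_periodic (s N : ℕ) (hs : 3 ≤ s) (hN : 1 ≤ N)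
    (φ : SymbSpace s → EuclideanSpace ℝ (Fin N))
    (R : ℝ) (hR : 0 < R) (hbdd : ∀ ξ, ‖φ ξ‖ ≤ R) (hloc : ExpLocDet φ)
    (k : ℕ) (hk : 0 < k) (ξ : Fin k → SymbSpace s) (p : Fin k → ℕ)
    (hp : ∀ i, 0 < p i) (hper : ∀ i, shift^[p i] (ξ i) = ξ i)
    (ρ : Fin k → EuclideanSpace ℝ (Fin N)) (hρ : ∀ i, HasRotVec φ (ξ i) (ρ i))
    (t : Fin k → ℝ) (ht0 : ∀ i, 0 ≤ t i) (ht1 : ∑ i, t i = 1)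
    (v : EuclideanSpace ℝ (Fin N)) (hv : v = ∑ i, t i • ρ i)
    (ε : ℝ) (hε : 0 < ε) :
    ∃ (η : SymbSpace s) (q : ℕ), 0 < q ∧ shift^[q] η = η ∧
      ∃ ρη : EuclideanSpace ℝ (Fin N), HasRotVec φ η ρη ∧ ‖ρη - v‖ < ε := by
  classical
  set Pset : Set (EuclideanSpace ℝ (Fin N)) :=
    {x | ∃ (η : SymbSpace s) (q : ℕ), 0 < q ∧ shift^[q] η = η ∧ HasRotVec φ η x} with hPset
  have hPmem : ∀ i, ρ i ∈ Pset := fun i => ⟨ξ i, p i, hp i, hper i, hρ i⟩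
  have hseg : ∀ x ∈ Pset, ∀ y ∈ Pset, ∀ a b : ℝ, 0 ≤ a → 0 ≤ b → a + b = 1 →
      a • x + b • y ∈ closure Pset := by
    rintro x ⟨ηx, qx, hqx, hperx, hrx⟩ y ⟨ηy, qy, hqy, hpery, hry⟩ a b ha hb hab
    rw [Metric.mem_closure_iff]
    intro ε' hε'
    obtain ⟨η, q, hq, hperη, hrot, hclose⟩ :=
      binary_approx hs φ hR hbdd hloc hqx hqy hperx hpery hrx hry ha (by linarith) hε'
    refine ⟨birk φ q η, ⟨η, q, hq, hperη, hrot⟩, ?_⟩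
    have hb' : b = 1 - a := by linarith
    rw [dist_eq_norm, norm_sub_rev, hb']
    exact hclose
  have hconv : Convex ℝ (closure Pset) := by
    intro x hx y hy a b ha hb hab
    rw [Metric.mem_closure_iff]
    intro ε' hε'
    rw [Metric.mem_closure_iff] at hx hy
    obtain ⟨x', hx', hxd⟩ := hx (ε'/3) (by linarith)
    obtain ⟨y', hy', hyd⟩ := hy (ε'/3) (by linarith)
    have hmem := hseg x' hx' y' hy' a b ha hb hab
    rw [Metric.mem_closure_iff] at hmem
    obtain ⟨z, hz, hzd⟩ := hmem (ε'/3) (by linarith)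
    refine ⟨z, hz, ?_⟩
    have hd1 : dist (a • x + b • y) (a • x' + b • y') ≤ a * dist x x' + b * dist y y' := by
      rw [dist_eq_norm, dist_eq_norm, dist_eq_norm]
      have hmod : a • x + b • y - (a • x' + b • y') = a • (x - x') + b • (y - y') := by
        module
      rw [hmod]
      calc ‖a • (x - x') + b • (y - y')‖ ≤ ‖a • (x - x')‖ + ‖b • (y - y')‖ := norm_add_le _ _
        _ = a * ‖x - x'‖ + b * ‖y - y'‖ := by
            rw [norm_smul, norm_smul, Real.norm_eq_abs, Real.norm_eq_abs,
              abs_of_nonneg ha, abs_of_nonneg hb]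
    have e1 : a * dist x x' ≤ a * (ε'/3) := mul_le_mul_of_nonneg_left hxd.le ha
    have e2 : b * dist y y' ≤ b * (ε'/3) := mul_le_mul_of_nonneg_left hyd.le hb
    have e3 : a * (ε'/3) + b * (ε'/3) = ε'/3 := by rw [← add_mul, hab, one_mul]
    have e4 := dist_triangle (a • x + b • y) (a • x' + b • y') z
    linarith
  have hvP : v ∈ closure Pset := by
    rw [hv]
    exact hconv.sum_mem (fun i _ => ht0 i) ht1 (fun i _ => subset_closure (hPmem i))
  rw [Metric.mem_closure_iff] at hvP
  obtain ⟨z, ⟨η, q, hq, hperη, hrz⟩, hzd⟩ := hvP ε hε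
  exact ⟨η, q, hq, hperη, z, hrz, by rwa [← dist_eq_norm, dist_comm]⟩
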